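/- Let M be a model category, and let f : A₁ → A₂ be a weak equivalence between objects of M that are both fibrant and cofibrant. Then f has a homotopy inverse: there exists g : A₂ → A₁ such that g ∘ f is left homotopic to the identity of A₁ and f ∘ g is left homotopic to the identity of A₂. -/

import Mathlib

open CategoryTheory CategoryTheory.Limits

universe v u

/-- `f` is a retract of `g` in the arrow category. -/
structure ArrowRetract {M : Type u} [Category.{v} M] {X Y X' Y' : M}
    (f : X ⟶ Y) (g : X' ⟶ Y') where
  ia : X ⟶ X'
  ra : X' ⟶ X
  ib : Y ⟶ Y'
  rb : Y' ⟶ Y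
  retr_a : ia ≫ ra = 𝟙 X
  retr_b : ib ≫ rb = 𝟙 Y
  sq_i : ia ≫ g = f ≫ ib
  sq_r : ra ≫ f = g ≫ rb

/-- A model structure on a category: weak equivalences, fibrations and cofibrations
satisfying two-out-of-three, retract closure, lifting and factorization axioms. -/
structure ModelStructure (M : Type u) [Category.{v} M] where
  W : MorphismProperty M
  Fib : MorphismProperty M
  Cof : MorphismProperty M
  w_comp : ∀ {X Y Z : M} (f : X ⟶ Y) (g : Y ⟶ Z), W f → W g → W (f ≫ g)
  w_cancel_left : ∀ {X Y Z : M} (f : X ⟶ Y) (g : Y ⟶ Z), W f → W (f ≫ g) → W g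
  w_cancel_right : ∀ {X Y Z : M} (f : X ⟶ Y) (g : Y ⟶ Z), W g → W (f ≫ g) → W f
  w_retract : ∀ {X Y X' Y' : M} {f : X ⟶ Y} {g : X' ⟶ Y'}, ArrowRetract f g → W g → W f
  fib_retract : ∀ {X Y X' Y' : M} {f : X ⟶ Y} {g : X' ⟶ Y'}, ArrowRetract f g → Fib g → Fib f
  cof_retract : ∀ {X Y X' Y' : M} {f : X ⟶ Y} {g : X' ⟶ Y'}, ArrowRetract f g → Cof g → Cof f
  lift_trivCof_fib : ∀ {A B X Y : M} (i : A ⟶ B) (p : X ⟶ Y), Cof i → W i → Fib p →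
    HasLiftingProperty i p
  lift_cof_trivFib : ∀ {A B X Y : M} (i : A ⟶ B) (p : X ⟶ Y), Cof i → Fib p → W p →
    HasLiftingProperty i p
  factor_trivCof_fib : ∀ {X Y : M} (f : X ⟶ Y), ∃ (Z : M) (i : X ⟶ Z) (p : Z ⟶ Y),
    Cof i ∧ W i ∧ Fib p ∧ i ≫ p = f
  factor_cof_trivFib : ∀ {X Y : M} (f : X ⟶ Y), ∃ (Z : M) (i : X ⟶ Z) (p : Z ⟶ Y),
    Cof i ∧ Fib p ∧ W p ∧ i ≫ p = f

/-- An object is cofibrant if the map from the initial object is a cofibration. -/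
def ModelStructure.Cofibrant {M : Type u} [Category.{v} M] [HasInitial M]
    (S : ModelStructure M) (A : M) : Prop :=
  S.Cof (initial.to A)

/-- An object is fibrant if the map to the terminal object is a fibration. -/
def ModelStructure.Fibrant {M : Type u} [Category.{v} M] [HasTerminal M]
    (S : ModelStructure M) (A : M) : Prop :=
  S.Fib (terminal.from A)

/-- `h` and `k` are left homotopic: there is a cylinder object `Cyl` for `X`
(a factorization of the fold map data, with the projection a weak equivalence)
and a homotopy `H : Cyl ⟶ Y` restricting to `h` and `k` on the two ends. -/
def LeftHomotopic {M : Type u} [Category.{v} M] (S : ModelStructure M) {X Y : M}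
    (h k : X ⟶ Y) : Prop :=
  ∃ (Cyl : M) (i₀ i₁ : X ⟶ Cyl) (p : Cyl ⟶ X),
    S.W p ∧ i₀ ≫ p = 𝟙 X ∧ i₁ ≫ p = 𝟙 X ∧
    ∃ H : Cyl ⟶ Y, i₀ ≫ H = h ∧ i₁ ≫ H = k

section Aux

variable {M : Type u} [Category.{v} M] (S : ModelStructure M)

/-- Identities are weak equivalences. -/
lemma W_id (X : M) : S.W (𝟙 X) := by
  obtain ⟨Z, i, p, _, _, hwp, hip⟩ := S.factor_cof_trivFib (𝟙 X)
  exact S.w_retract ⟨i, p, 𝟙 X, 𝟙 X, hip, by simp, by simpa using hip, by simp⟩ hwp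

/-- A map with the left lifting property against all trivial fibrations is a cofibration. -/
lemma Cof_of_llp {X Y : M} (g : X ⟶ Y)
    (h : ∀ {E D : M} (p : E ⟶ D), S.Fib p → S.W p → HasLiftingProperty g p) : S.Cof g := by
  obtain ⟨Z, i, p, hci, hfp, hwp, hip⟩ := S.factor_cof_trivFib g
  haveI := h p hfp hwp
  have sq : CommSq i g p (𝟙 Y) := ⟨by simp [hip]⟩
  exact S.cof_retract
    ⟨𝟙 X, 𝟙 X, sq.lift, p, by simp, sq.fac_right, by simp [sq.fac_left], by simp [hip]⟩ hci

/-- A map with the left lifting property against all fibrations is a trivial cofibration. -/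
lemma trivCof_of_llp {X Y : M} (g : X ⟶ Y)
    (h : ∀ {E D : M} (p : E ⟶ D), S.Fib p → HasLiftingProperty g p) :
    S.Cof g ∧ S.W g := by
  obtain ⟨Z, i, p, hci, hwi, hfp, hip⟩ := S.factor_trivCof_fib g
  haveI := h p hfp
  have sq : CommSq i g p (𝟙 Y) := ⟨by simp [hip]⟩
  have R : ArrowRetract g i :=
    ⟨𝟙 X, 𝟙 X, sq.lift, p, by simp, sq.fac_right, by simp [sq.fac_left], by simp [hip]⟩
  exact ⟨S.cof_retract R hci, S.w_retract R hwi⟩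

/-- A map with the right lifting property against all trivial cofibrations is a fibration. -/
lemma Fib_of_rlp {X Y : M} (g : X ⟶ Y)
    (h : ∀ {E D : M} (i : E ⟶ D), S.Cof i → S.W i → HasLiftingProperty i g) : S.Fib g := by
  obtain ⟨Z, i, p, hci, hwi, hfp, hip⟩ := S.factor_trivCof_fib g
  haveI := h i hci hwi
  have sq : CommSq (𝟙 X) i g p := ⟨by simp [hip]⟩
  exact S.fib_retract
    ⟨i, sq.lift, 𝟙 Y, 𝟙 Y, sq.fac_left, by simp, by simp [hip], by simp [sq.fac_right]⟩ hfp

/-- Cofibrations are closed under composition. -/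
lemma Cof_comp {X Y Z : M} {g₁ : X ⟶ Y} {g₂ : Y ⟶ Z} (h₁ : S.Cof g₁) (h₂ : S.Cof g₂) :
    S.Cof (g₁ ≫ g₂) := by
  apply Cof_of_llp
  intro E D p hfp hwp
  haveI := S.lift_cof_trivFib g₁ p h₁ hfp hwp
  haveI := S.lift_cof_trivFib g₂ p h₂ hfp hwp
  infer_instance

/-- Fibrations are closed under composition. -/
lemma Fib_comp {X Y Z : M} {g₁ : X ⟶ Y} {g₂ : Y ⟶ Z} (h₁ : S.Fib g₁) (h₂ : S.Fib g₂) :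
    S.Fib (g₁ ≫ g₂) := by
  apply Fib_of_rlp
  intro E D i hci hwi
  haveI := S.lift_trivCof_fib i g₁ hci hwi h₁
  haveI := S.lift_trivCof_fib i g₂ hci hwi h₂
  infer_instance

end Aux
section Aux2

variable {M : Type u} [Category.{v} M] (S : ModelStructure M)

/-- If a trivial cofibration equalizes `u` and `v`, then `u` and `v` are left homotopic. -/
lemma leftHomotopic_of_trivCof_eq [HasFiniteColimits M] {A B X : M}
    (j : A ⟶ B) (hcj : S.Cof j) (hwj : S.W j) (u v : B ⟶ X) (huv : j ≫ u = j ≫ v) :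
    LeftHomotopic S u v := by
  -- the pushout B ⊔_A B; pushout.inl is a trivial cofibration (pushout of one)
  have hinl : S.Cof (pushout.inl j j) ∧ S.W (pushout.inl j j) := by
    apply trivCof_of_llp
    intro E D p hfp
    haveI := S.lift_trivCof_fib j p hcj hwj hfp
    constructor
    intro t b sq
    have sq' : CommSq (j ≫ t) j p ((pushout.inr j j) ≫ b) :=
      ⟨by rw [Category.assoc, sq.w, ← Category.assoc, pushout.condition, Category.assoc]⟩
    exact ⟨⟨⟨pushout.desc t sq'.lift (by rw [sq'.fac_left]),
      by simp [coprod.inl_desc, coprod.inr_desc, pushout.inl_desc, pushout.inr_desc, coprod.inl_desc_assoc, coprod.inr_desc_assoc, pushout.inl_desc_assoc, pushout.inr_desc_assoc], by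
        apply pushout.hom_ext
        · simpa [coprod.inl_desc, coprod.inr_desc, pushout.inl_desc, pushout.inr_desc, coprod.inl_desc_assoc, coprod.inr_desc_assoc, pushout.inl_desc_assoc, pushout.inr_desc_assoc] using sq.w
        · simp [sq'.fac_right, coprod.inl_desc, coprod.inr_desc, pushout.inl_desc, pushout.inr_desc, coprod.inl_desc_assoc, coprod.inr_desc_assoc, pushout.inl_desc_assoc, pushout.inr_desc_assoc]⟩⟩⟩
  have hφ : S.W (pushout.desc (𝟙 B) (𝟙 B) rfl : pushout j j ⟶ B) := by
    apply S.w_cancel_left (pushout.inl j j) _ hinl.2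
    have : pushout.inl j j ≫ pushout.desc (𝟙 B) (𝟙 B) rfl = 𝟙 B := by simp [coprod.inl_desc, coprod.inr_desc, pushout.inl_desc, pushout.inr_desc, coprod.inl_desc_assoc, coprod.inr_desc_assoc, pushout.inl_desc_assoc, pushout.inr_desc_assoc]
    rw [this]; exact W_id S B
  -- factor the canonical map B ⊔ B ⟶ P
  obtain ⟨Cyl, k, π, hck, hfπ, hwπ, hkπ⟩ :=
    S.factor_cof_trivFib (coprod.desc (pushout.inl j j) (pushout.inr j j))
  refine ⟨Cyl, coprod.inl ≫ k, coprod.inr ≫ k, π ≫ pushout.desc (𝟙 B) (𝟙 B) rfl,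
    S.w_comp _ _ hwπ hφ, ?_, ?_, π ≫ pushout.desc u v huv, ?_, ?_⟩
  · rw [Category.assoc, ← Category.assoc k, hkπ]; simp [coprod.inl_desc, coprod.inr_desc, pushout.inl_desc, pushout.inr_desc, coprod.inl_desc_assoc, coprod.inr_desc_assoc, pushout.inl_desc_assoc, pushout.inr_desc_assoc]
  · rw [Category.assoc, ← Category.assoc k, hkπ]; simp [coprod.inl_desc, coprod.inr_desc, pushout.inl_desc, pushout.inr_desc, coprod.inl_desc_assoc, coprod.inr_desc_assoc, pushout.inl_desc_assoc, pushout.inr_desc_assoc]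
  · rw [Category.assoc, ← Category.assoc k, hkπ]; simp [coprod.inl_desc, coprod.inr_desc, pushout.inl_desc, pushout.inr_desc, coprod.inl_desc_assoc, coprod.inr_desc_assoc, pushout.inl_desc_assoc, pushout.inr_desc_assoc]
  · rw [Category.assoc, ← Category.assoc k, hkπ]; simp [coprod.inl_desc, coprod.inr_desc, pushout.inl_desc, pushout.inr_desc, coprod.inl_desc_assoc, coprod.inr_desc_assoc, pushout.inl_desc_assoc, pushout.inr_desc_assoc]

end Aux2
section Aux3

variable {M : Type u} [Category.{v} M] (S : ModelStructure M)

/-- A left homotopy on a *very good* cylinder: the projection is a trivial fibration. -/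
def VeryGoodHomotopy {X Y : M} (u v : X ⟶ Y) : Prop :=
  ∃ (Cyl : M) (i₀ i₁ : X ⟶ Cyl) (p : Cyl ⟶ X),
    S.W p ∧ S.Fib p ∧ i₀ ≫ p = 𝟙 X ∧ i₁ ≫ p = 𝟙 X ∧
    ∃ H : Cyl ⟶ Y, i₀ ≫ H = u ∧ i₁ ≫ H = v

lemma VeryGoodHomotopy.leftHomotopic {X Y : M} {u v : X ⟶ Y}
    (h : VeryGoodHomotopy S u v) : LeftHomotopic S u v := by
  obtain ⟨C, i₀, i₁, p, hw, _, h₀, h₁, H, e₀, e₁⟩ := h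
  exact ⟨C, i₀, i₁, p, hw, h₀, h₁, H, e₀, e₁⟩

/-- If the target is fibrant, any left homotopy can be upgraded to a very good one. -/
lemma leftHomotopic_upgrade [HasTerminal M] [HasFiniteColimits M] {X Y : M} {u v : X ⟶ Y}
    (hY : S.Fibrant Y) (h : LeftHomotopic S u v) : VeryGoodHomotopy S u v := by
  obtain ⟨C, i₀, i₁, p, hwp, h₀, h₁, H, e₀, e₁⟩ := h
  -- factor (i₀, i₁) : X ⊔ X ⟶ C as a cofibration followed by a trivial fibration
  obtain ⟨C', k', s, hck', hfs, hws, hks⟩ := S.factor_cof_trivFib (coprod.desc i₀ i₁)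
  -- factor s ≫ p as a trivial cofibration followed by a fibration
  obtain ⟨C'', t, p'', hct, hwt, hfp'', htp⟩ := S.factor_trivCof_fib (s ≫ p)
  have hwp'' : S.W p'' := S.w_cancel_left t p'' hwt (by rw [htp]; exact S.w_comp s p hws hwp)
  -- extend s ≫ H along the trivial cofibration t, using fibrancy of Y
  haveI := S.lift_trivCof_fib t (terminal.from Y) hct hwt hY
  have sq : CommSq (s ≫ H) t (terminal.from Y) (terminal.from C'') :=
    ⟨terminal.hom_ext _ _⟩
  refine ⟨C'', coprod.inl ≫ k' ≫ t, coprod.inr ≫ k' ≫ t, p'', hwp'', hfp'', ?_, ?_,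
    sq.lift, ?_, ?_⟩
  · simp only [Category.assoc]; rw [htp, reassoc_of% hks]; simp [h₀, coprod.inl_desc, coprod.inr_desc, pushout.inl_desc, pushout.inr_desc, coprod.inl_desc_assoc, coprod.inr_desc_assoc, pushout.inl_desc_assoc, pushout.inr_desc_assoc]
  · simp only [Category.assoc]; rw [htp, reassoc_of% hks]; simp [h₁, coprod.inl_desc, coprod.inr_desc, pushout.inl_desc, pushout.inr_desc, coprod.inl_desc_assoc, coprod.inr_desc_assoc, pushout.inl_desc_assoc, pushout.inr_desc_assoc]
  · simp only [Category.assoc]; rw [sq.fac_left, reassoc_of% hks]; simp [e₀, coprod.inl_desc, coprod.inr_desc, pushout.inl_desc, pushout.inr_desc, coprod.inl_desc_assoc, coprod.inr_desc_assoc, pushout.inl_desc_assoc, pushout.inr_desc_assoc]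
  · simp only [Category.assoc]; rw [sq.fac_left, reassoc_of% hks]; simp [e₁, coprod.inl_desc, coprod.inr_desc, pushout.inl_desc, pushout.inr_desc, coprod.inl_desc_assoc, coprod.inr_desc_assoc, pushout.inl_desc_assoc, pushout.inr_desc_assoc]

/-- Left homotopy (via a very good cylinder) is preserved by pre- and post-composition. -/
lemma VeryGoodHomotopy.conj [HasFiniteColimits M] {X Y W' Z : M} {u v : X ⟶ Y}
    (h : VeryGoodHomotopy S u v) (a : W' ⟶ X) (b : Y ⟶ Z) :
    LeftHomotopic S (a ≫ u ≫ b) (a ≫ v ≫ b) := by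
  obtain ⟨C, i₀, i₁, p, hwp, hfp, h₀, h₁, H, e₀, e₁⟩ := h
  -- a cylinder on W'
  obtain ⟨CW, kW, pW, hckW, hfpW, hwpW, hkWp⟩ :=
    S.factor_cof_trivFib (coprod.desc (𝟙 W') (𝟙 W'))
  haveI := S.lift_cof_trivFib kW p hckW hfp hwp
  have sq : CommSq (coprod.desc (a ≫ i₀) (a ≫ i₁)) kW p (pW ≫ a) := ⟨by
    apply coprod.hom_ext
    · simp only [coprod.inl_desc_assoc, Category.assoc, h₀, Category.comp_id]
      rw [reassoc_of% hkWp]; simp [coprod.inl_desc, coprod.inr_desc, pushout.inl_desc, pushout.inr_desc, coprod.inl_desc_assoc, coprod.inr_desc_assoc, pushout.inl_desc_assoc, pushout.inr_desc_assoc]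
    · simp only [coprod.inr_desc_assoc, Category.assoc, h₁, Category.comp_id]
      rw [reassoc_of% hkWp]; simp [coprod.inl_desc, coprod.inr_desc, pushout.inl_desc, pushout.inr_desc, coprod.inl_desc_assoc, coprod.inr_desc_assoc, pushout.inl_desc_assoc, pushout.inr_desc_assoc]⟩
  refine ⟨CW, coprod.inl ≫ kW, coprod.inr ≫ kW, pW, hwpW, ?_, ?_,
    sq.lift ≫ H ≫ b, ?_, ?_⟩
  · rw [Category.assoc, hkWp]; simp [coprod.inl_desc, coprod.inr_desc, pushout.inl_desc, pushout.inr_desc, coprod.inl_desc_assoc, coprod.inr_desc_assoc, pushout.inl_desc_assoc, pushout.inr_desc_assoc]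
  · rw [Category.assoc, hkWp]; simp [coprod.inl_desc, coprod.inr_desc, pushout.inl_desc, pushout.inr_desc, coprod.inl_desc_assoc, coprod.inr_desc_assoc, pushout.inl_desc_assoc, pushout.inr_desc_assoc]
  · simp only [Category.assoc]; rw [reassoc_of% sq.fac_left]
    simp only [coprod.inl_desc_assoc, Category.assoc]
    rw [reassoc_of% e₀]
  · simp only [Category.assoc]; rw [reassoc_of% sq.fac_left]
    simp only [coprod.inr_desc_assoc, Category.assoc]
    rw [reassoc_of% e₁]

end Aux3
section Aux4

variable {M : Type u} [Category.{v} M] (S : ModelStructure M)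

/-- A trivial fibration between cofibrant objects has a section which is also a
left homotopy inverse. -/
lemma trivFib_case [HasInitial M] [HasFiniteColimits M] {A B : M} (p : A ⟶ B)
    (hfp : S.Fib p) (hwp : S.W p) (_hcA : S.Cofibrant A) (hcB : S.Cofibrant B) :
    ∃ g : B ⟶ A, g ≫ p = 𝟙 B ∧ LeftHomotopic S (p ≫ g) (𝟙 A) := by
  haveI := S.lift_cof_trivFib (initial.to B) p hcB hfp hwp
  have sq : CommSq (initial.to A) (initial.to B) p (𝟙 B) := ⟨initial.hom_ext _ _⟩
  refine ⟨sq.lift, sq.fac_right, ?_⟩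
  -- a cylinder on A
  obtain ⟨Cyl, k, q, hck, hfq, hwq, hkq⟩ := S.factor_cof_trivFib (coprod.desc (𝟙 A) (𝟙 A))
  haveI := S.lift_cof_trivFib k p hck hfp hwp
  have sq2 : CommSq (coprod.desc (p ≫ sq.lift) (𝟙 A)) k p (q ≫ p) := ⟨by
    apply coprod.hom_ext
    · simp only [coprod.inl_desc_assoc, Category.assoc, sq.fac_right, Category.comp_id]
      rw [reassoc_of% hkq]; simp [coprod.inl_desc, coprod.inr_desc, pushout.inl_desc, pushout.inr_desc, coprod.inl_desc_assoc, coprod.inr_desc_assoc, pushout.inl_desc_assoc, pushout.inr_desc_assoc]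
    · simp only [coprod.inr_desc_assoc, Category.id_comp]
      rw [reassoc_of% hkq]; simp [coprod.inl_desc, coprod.inr_desc, pushout.inl_desc, pushout.inr_desc, coprod.inl_desc_assoc, coprod.inr_desc_assoc, pushout.inl_desc_assoc, pushout.inr_desc_assoc]⟩
  refine ⟨Cyl, coprod.inl ≫ k, coprod.inr ≫ k, q, hwq, ?_, ?_, sq2.lift, ?_, ?_⟩
  · rw [Category.assoc, hkq]; simp [coprod.inl_desc, coprod.inr_desc, pushout.inl_desc, pushout.inr_desc, coprod.inl_desc_assoc, coprod.inr_desc_assoc, pushout.inl_desc_assoc, pushout.inr_desc_assoc]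
  · rw [Category.assoc, hkq]; simp [coprod.inl_desc, coprod.inr_desc, pushout.inl_desc, pushout.inr_desc, coprod.inl_desc_assoc, coprod.inr_desc_assoc, pushout.inl_desc_assoc, pushout.inr_desc_assoc]
  · rw [Category.assoc, sq2.fac_left]; simp [coprod.inl_desc, coprod.inr_desc, pushout.inl_desc, pushout.inr_desc, coprod.inl_desc_assoc, coprod.inr_desc_assoc, pushout.inl_desc_assoc, pushout.inr_desc_assoc]
  · rw [Category.assoc, sq2.fac_left]; simp [coprod.inl_desc, coprod.inr_desc, pushout.inl_desc, pushout.inr_desc, coprod.inl_desc_assoc, coprod.inr_desc_assoc, pushout.inl_desc_assoc, pushout.inr_desc_assoc]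

/-- A trivial cofibration with fibrant source has a retraction which is also a
left homotopy inverse. -/
lemma trivCof_case [HasTerminal M] [HasFiniteColimits M] {A B : M} (j : A ⟶ B)
    (hcj : S.Cof j) (hwj : S.W j) (hfA : S.Fibrant A) :
    ∃ r : B ⟶ A, j ≫ r = 𝟙 A ∧ LeftHomotopic S (r ≫ j) (𝟙 B) := by
  haveI := S.lift_trivCof_fib j (terminal.from A) hcj hwj hfA
  have sq : CommSq (𝟙 A) j (terminal.from A) (terminal.from B) := ⟨terminal.hom_ext _ _⟩
  refine ⟨sq.lift, sq.fac_left, ?_⟩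
  apply leftHomotopic_of_trivCof_eq S j hcj hwj
  rw [← Category.assoc, sq.fac_left]; simp

end Aux4

/-- Whitehead's theorem: a weak equivalence between fibrant-cofibrant objects is a
homotopy equivalence. -/
theorem weq_has_homotopy_inverse
    (M : Type u) [Category.{v} M] [HasInitial M] [HasTerminal M] [HasFiniteColimits M]
    (S : ModelStructure M) {A₁ A₂ : M}
    (hc₁ : S.Cofibrant A₁) (hf₁ : S.Fibrant A₁) (hc₂ : S.Cofibrant A₂) (hf₂ : S.Fibrant A₂)
    (f : A₁ ⟶ A₂) (hf : S.W f) :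
    ∃ g : A₂ ⟶ A₁, LeftHomotopic S (f ≫ g) (𝟙 A₁) ∧ LeftHomotopic S (g ≫ f) (𝟙 A₂) := by
  obtain ⟨C, j, q, hcj, hfq, hwq, hfact⟩ := S.factor_cof_trivFib f
  have hwj : S.W j := S.w_cancel_right j q hwq (by rw [hfact]; exact hf)
  have hcC : S.Cofibrant C := by
    have e : initial.to C = initial.to A₁ ≫ j := initial.hom_ext _ _
    rw [ModelStructure.Cofibrant, e]; exact Cof_comp S hc₁ hcj
  have hfC : S.Fibrant C := by
    have e : terminal.from C = q ≫ terminal.from A₂ := terminal.hom_ext _ _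
    rw [ModelStructure.Fibrant, e]; exact Fib_comp S hfq hf₂
  obtain ⟨gq, hgq, Hq⟩ := trivFib_case S q hfq hwq hcC hc₂
  obtain ⟨r, hr, Hr⟩ := trivCof_case S j hcj hwj hf₁
  refine ⟨gq ≫ r, ?_, ?_⟩
  · have h := VeryGoodHomotopy.conj S (leftHomotopic_upgrade S hfC Hq) j r
    have e1 : j ≫ (q ≫ gq) ≫ r = f ≫ gq ≫ r := by rw [← hfact]; simp
    have e2 : j ≫ 𝟙 C ≫ r = 𝟙 A₁ := by rw [Category.id_comp, hr]
    rwa [e1, e2] at h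
  · have h := VeryGoodHomotopy.conj S (leftHomotopic_upgrade S hfC Hr) gq q
    have e1 : gq ≫ (r ≫ j) ≫ q = (gq ≫ r) ≫ f := by rw [← hfact]; simp
    have e2 : gq ≫ 𝟙 C ≫ q = 𝟙 A₂ := by rw [Category.id_comp, hgq]
    rwa [e1, e2] at h
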